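/- Let 𝒩 be a finite set and let v : Finset 𝒩 → ℝ be subadditive with v ≥ 0. Let p* : 𝒩 → ℝ with p* ≥ 0 and z ≥ 0 satisfy the dual feasibility condition Σ_{i∈T} p*_i + z ≥ v(T) for every T ⊆ 𝒩. Let A ⊆ 𝒩 be nonempty and partitioned as A = A⁺ ⊔ A⁻, and let (w_i)_{i∈A⁻} be reals with w_i > p*_i + z/|A| for every i ∈ A⁻. If v(A⁺) + Σ_{i∈A⁻} w_i < v(A)/2, then |A⁺| > |A⁻|. -/
import Mathlib


/-- Abstract form of the "half the agents remain" lemma for bad projects: if `v` is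
subadditive, `(p*, z)` is dual feasible, `A = A⁺ ⊔ A⁻` is nonempty, every `i ∈ A⁻` has
`w i > p*_i + z/|A|`, and `v(A⁺) + Σ_{i∈A⁻} w_i < v(A)/2`, then `|A⁺| > |A⁻|`. -/
theorem stmt15 {𝒩 : Type*} [Fintype 𝒩] [DecidableEq 𝒩]
    (v : Finset 𝒩 → ℝ)
    (hnonneg : ∀ T : Finset 𝒩, 0 ≤ v T)
    (hsubadd : ∀ A B : Finset 𝒩, v (A ∪ B) ≤ v A + v B)
    (pstar : 𝒩 → ℝ) (hpstar : ∀ i, 0 ≤ pstar i)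
    (z : ℝ) (hz : 0 ≤ z)
    (hdual : ∀ T : Finset 𝒩, v T ≤ ∑ i ∈ T, pstar i + z)
    (A Aplus Aminus : Finset 𝒩)
    (hA : A.Nonempty)
    (hunion : Aplus ∪ Aminus = A)
    (hdisj : Disjoint Aplus Aminus)
    (w : 𝒩 → ℝ)
    (hw : ∀ i ∈ Aminus, pstar i + z / (A.card : ℝ) < w i)
    (h : v Aplus + ∑ i ∈ Aminus, w i < v A / 2) :
    Aminus.card < Aplus.card := by
  by_contra hc
  push_neg at hc
  rcases Aminus.eq_empty_or_nonempty with hm | hm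
  · subst hm
    simp only [Finset.card_empty, Nat.le_zero, Finset.card_eq_zero] at hc
    subst hc
    simp at hunion
    exact absurd hunion.symm (Finset.nonempty_iff_ne_empty.mp hA)
  -- cardinalities
  have hcard : Aplus.card + Aminus.card = A.card := by
    rw [← hunion, Finset.card_union_of_disjoint hdisj]
  have hn : (0 : ℝ) < (A.card : ℝ) := by
    exact_mod_cast Nat.pos_of_ne_zero (by
      intro h0
      exact absurd (Finset.card_eq_zero.mp h0) (Finset.nonempty_iff_ne_empty.mp hA))
  -- v A ≤ v Aplus + (S + z)
  have hvA : v A ≤ v Aplus + (∑ i ∈ Aminus, pstar i + z) := by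
    calc v A = v (Aplus ∪ Aminus) := by rw [hunion]
    _ ≤ v Aplus + v Aminus := hsubadd _ _
    _ ≤ v Aplus + (∑ i ∈ Aminus, pstar i + z) := by linarith [hdual Aminus]
  -- strict sum bound
  have hsum : ∑ i ∈ Aminus, (pstar i + z / (A.card : ℝ)) < ∑ i ∈ Aminus, w i :=
    Finset.sum_lt_sum_of_nonempty hm hw
  have hsum' : ∑ i ∈ Aminus, pstar i + (Aminus.card : ℝ) * (z / (A.card : ℝ))
      < ∑ i ∈ Aminus, w i := by
    rw [Finset.sum_add_distrib, Finset.sum_const, nsmul_eq_mul] at hsum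
    exact hsum
  -- from hc : Aplus.card ≤ Aminus.card, 2 * Aminus.card ≥ A.card
  have h2 : (A.card : ℝ) ≤ 2 * (Aminus.card : ℝ) := by
    have : A.card ≤ 2 * Aminus.card := by omega
    exact_mod_cast this
  have hzhalf : z / 2 ≤ (Aminus.card : ℝ) * (z / (A.card : ℝ)) := by
    rw [mul_div_assoc', div_le_div_iff₀ two_pos hn]
    nlinarith
  have hS : 0 ≤ ∑ i ∈ Aminus, pstar i := Finset.sum_nonneg fun i _ => hpstar i
  nlinarith [hnonneg Aplus]
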